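/- Let r ≥ 1 and let X ⊆ P_n be a nonempty set of partitions with |x| = r for all x ∈ X. If every (z,l) ∈ Z(X) satisfies |z| + l + 1 ≤ r, then the ideal I_X is symmetric shifted. -/
import Mathlib


open MvPolynomial

/-- `PartitionOn n x` : `x` is a weakly decreasing sequence of naturals (0-based
indexing, so `x 0` is the first part `x_1`) vanishing from index `n` on; this
encodes a partition in `P_n ⊆ ℤ^n_{≥0}`. -/
def PartitionOn (n : ℕ) (x : ℕ → ℕ) : Prop :=
  (∀ i j : ℕ, i ≤ j → x j ≤ x i) ∧ ∀ i : ℕ, n ≤ i → x i = 0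

/-- A partition: a weakly decreasing, eventually zero sequence of naturals. -/
def IsPartitionF (x : ℕ → ℕ) : Prop :=
  (∀ i j : ℕ, i ≤ j → x j ≤ x i) ∧ ∃ n : ℕ, ∀ i : ℕ, n ≤ i → x i = 0

/-- The conjugate partition (1-based index): `conj x i = #{j : x_j ≥ i}`. -/
noncomputable def conj (x : ℕ → ℕ) (i : ℕ) : ℕ :=
  Set.ncard { j : ℕ | i ≤ x j }

/-- The truncation `x(c)`, whose parts are `min (x i) c`. -/
def trunc (x : ℕ → ℕ) (c : ℕ) : ℕ → ℕ := fun i => min (x i) c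

/-- The rectangular partition `(b^a)`: `a` parts equal to `b`. -/
def rect (a b : ℕ) : ℕ → ℕ := fun i => if i < a then b else 0

/-- The size `|x| = x_1 + ⋯ + x_n` of a partition supported in the first `n` indices. -/
def psize (n : ℕ) (x : ℕ → ℕ) : ℕ := ∑ i ∈ Finset.range n, x i

/-- The set `Z(X)` : pairs `(z, l)` with `z ∈ P_n`, `l ≥ 0` such that, writing `c = z_1`:
(1) there is `x ∈ X` with `x(c) ≤ z` and `x'_{c+1} ≤ l+1`, and
(2) every `x ∈ X` with `x(c) ≤ z` and `x'_{c+1} ≤ l+1` has `x'_{c+1} = l+1`. -/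
noncomputable def ZX (n : ℕ) (X : Set (ℕ → ℕ)) : Set ((ℕ → ℕ) × ℕ) :=
  { zl | PartitionOn n zl.1 ∧
    (∃ x ∈ X, trunc x (zl.1 0) ≤ zl.1 ∧ conj x (zl.1 0 + 1) ≤ zl.2 + 1) ∧
    ∀ x ∈ X, trunc x (zl.1 0) ≤ zl.1 → conj x (zl.1 0 + 1) ≤ zl.2 + 1 →
      conj x (zl.1 0 + 1) = zl.2 + 1 }

/-- The monomial `e^u = e_1^{u_1} ⋯ e_n^{u_n}` in `S = k[e_1, …, e_n]`. -/
noncomputable def mon (k : Type*) [Field k] (n : ℕ) (u : ℕ → ℕ) : MvPolynomial (Fin n) k :=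
  ∏ i : Fin n, (X i : MvPolynomial (Fin n) k) ^ u (i : ℕ)

/-- The ideal `I_x` generated by the `S_n`-orbit of the monomial `e^x`. -/
noncomputable def Ipart (k : Type*) [Field k] (n : ℕ) (x : ℕ → ℕ) :
    Ideal (MvPolynomial (Fin n) k) :=
  Ideal.span { f | ∃ σ : Equiv.Perm (Fin n),
    f = ∏ i : Fin n, (X i : MvPolynomial (Fin n) k) ^ x ((σ i : Fin n) : ℕ) }

/-- The ideal `I_X = Σ_{x ∈ X} I_x`. -/
noncomputable def IXset (k : Type*) [Field k] (n : ℕ) (Xs : Set (ℕ → ℕ)) :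
    Ideal (MvPolynomial (Fin n) k) :=
  ⨆ x ∈ Xs, Ipart k n x

/-- `succ(z,l) = {x ∈ P_n : x ≥ z and x_i > z_i for some i > l}` (1-based `i > l`
corresponds to 0-based index `≥ l`). -/
def succSet (n l : ℕ) (z : ℕ → ℕ) : Set (ℕ → ℕ) :=
  { x | PartitionOn n x ∧ (∀ i, z i ≤ x i) ∧ ∃ i, l ≤ i ∧ z i < x i }

/-- `Y_{z,l} = {((z_1+1)^{l+1})} ∪ {((z_i+1)^i) : l+1 < i ≤ n, z_{i-1} > z_i}`
(here `i = m+2` in 1-based indexing). -/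
def Yset (n : ℕ) (z : ℕ → ℕ) (l : ℕ) : Set (ℕ → ℕ) :=
  {rect (l+1) (z 0 + 1)} ∪
    { y | ∃ m : ℕ, l ≤ m ∧ m + 2 ≤ n ∧ z (m+1) < z m ∧ y = rect (m+2) (z (m+1) + 1) }

/-- `Y'_{z,l} = {((z_i+1)^i) : l+1 < i ≤ n, z_{i-1} > z_i}`. -/
def Y'set (n : ℕ) (z : ℕ → ℕ) (l : ℕ) : Set (ℕ → ℕ) :=
  { y | ∃ m : ℕ, l ≤ m ∧ m + 2 ≤ n ∧ z (m+1) < z m ∧ y = rect (m+2) (z (m+1) + 1) }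

/-- An ideal `I` is symmetric shifted if for every monomial `e^x ∈ I` with `x ∈ P_n`
and every `1 < k ≤ n` (0-based `0 < j < n`) with `x_1 > x_k`, one has `e^x · e_k/e_1 ∈ I`. -/
def SymShifted (k : Type*) [Field k] (n : ℕ) (I : Ideal (MvPolynomial (Fin n) k)) : Prop :=
  ∀ x : ℕ → ℕ, PartitionOn n x → mon k n x ∈ I →
    ∀ j : ℕ, 0 < j → j < n → x j < x 0 →
      mon k n (fun i => if i = 0 then x 0 - 1 else if i = j then x j + 1 else x i) ∈ I

/-- The partitioning problem `BP(d, C; w)` is `r`-feasible: the multiset of `d` copies of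
each of `w_1, …, w_n` (balls indexed by `Fin d × Fin n`, ball `(j,i)` of weight `w_i`)
can be distributed into bins `B_1, …, B_n` of exactly `d` balls each so that
`w(B_i) ≤ C_i` for all `i = r+1, …, n` (0-based bins `≥ r`). -/
def RFeasible (n d r : ℕ) (C w : ℕ → ℕ) : Prop :=
  ∃ A : Fin d × Fin n → Fin n,
    (∀ b : Fin n, (Finset.univ.filter fun p => A p = b).card = d) ∧
    ∀ b : Fin n, r ≤ (b : ℕ) →
      (∑ p ∈ Finset.univ.filter (fun p => A p = b), w ((p.2 : Fin n) : ℕ)) ≤ C (b : ℕ)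

/-- `X_w^d = {x ∈ P_n : x = σ_1(w) + ⋯ + σ_d(w) for some σ_1, …, σ_d ∈ S_n}`. -/
def XwPow (n d : ℕ) (w : ℕ → ℕ) : Set (ℕ → ℕ) :=
  { x | PartitionOn n x ∧ ∃ σ : Fin d → Equiv.Perm (Fin n),
      ∀ i : Fin n, x (i : ℕ) = ∑ j : Fin d, w ((σ j i : Fin n) : ℕ) }

/-- `Y_n`: the elements of `Y` with at most `n` nonzero parts, regarded in `P_n`. -/
def restr (Y : Set (ℕ → ℕ)) (n : ℕ) : Set (ℕ → ℕ) :=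
  { x ∈ Y | ∀ i, n ≤ i → x i = 0 }

lemma lowerset_eq_Iio (S : Set ℕ) (hS : S.Finite) (hdc : ∀ ⦃i j : ℕ⦄, i ≤ j → j ∈ S → i ∈ S) :
    S = Set.Iio S.ncard := by
  ext j
  simp only [Set.mem_Iio]
  constructor
  · intro hj
    have hsub : Set.Iic j ⊆ S := fun m hm => hdc hm hj
    have h1 : (Set.Iic j).ncard ≤ S.ncard := Set.ncard_le_ncard hsub hS
    have h2 : (Set.Iic j).ncard = j + 1 := by
      rw [← Finset.coe_Iic, Set.ncard_coe_finset, Nat.card_Iic]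
    omega
  · intro hj
    by_contra hjS
    have hsub : S ⊆ Set.Iio j := by
      intro m hm
      rw [Set.mem_Iio]
      by_contra hmj
      push_neg at hmj
      exact hjS (hdc hmj hm)
    have h1 : S.ncard ≤ (Set.Iio j).ncard := Set.ncard_le_ncard hsub (Set.finite_Iio j)
    have h2 : (Set.Iio j).ncard = j := by
      rw [← Finset.coe_range, Set.ncard_coe_finset, Finset.card_range]
    omega

lemma conj_set_eq {n : ℕ} {v : ℕ → ℕ} (hv : PartitionOn n v) {m : ℕ} (hm : 1 ≤ m) :
    {j : ℕ | m ≤ v j} = Set.Iio (conj v m) := by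
  apply lowerset_eq_Iio
  · apply Set.Finite.subset (Set.finite_Iio n)
    intro j hj
    simp only [Set.mem_setOf_eq] at hj
    by_contra h
    have := hv.2 j (by simpa using h)
    omega
  · intro i j hij hj
    exact le_trans hj (hv.1 i j hij)

lemma conj_lt_iff {n : ℕ} {v : ℕ → ℕ} (hv : PartitionOn n v) {m : ℕ} (hm : 1 ≤ m) (i : ℕ) :
    i < conj v m ↔ m ≤ v i := by
  have := conj_set_eq hv hm
  constructor
  · intro h
    have : i ∈ {j : ℕ | m ≤ v j} := this ▸ Set.mem_Iio.2 h
    exact this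
  · intro h
    have : i ∈ Set.Iio (conj v m) := this ▸ h
    exact this

lemma sorted_le {n : ℕ} {w x : ℕ → ℕ} (hw : PartitionOn n w) (hx : PartitionOn n x)
    (σ : Equiv.Perm (Fin n)) (h : ∀ i : Fin n, w ((σ i : Fin n) : ℕ) ≤ x i) :
    ∀ i : ℕ, w i ≤ x i := by
  intro i
  by_cases hi : i < n
  swap
  · rw [hw.2 i (by omega)]; exact Nat.zero_le _
  by_contra hcon
  push_neg at hcon
  -- T = {t : Fin n | σ t ≤ i} has card i+1, but T ⊆ {t | t < i}
  set T : Finset (Fin n) := Finset.univ.filter (fun t => ((σ t : Fin n) : ℕ) ≤ i) with hT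
  set S : Finset (Fin n) := Finset.univ.filter (fun s => (s : ℕ) ≤ i) with hS
  have hcardS : S.card = i + 1 := by
    have h1 : S.card = ((Finset.range n).filter (fun s => s ≤ i)).card := by
      rw [hS, Finset.card_filter, Finset.card_filter,
        Fin.sum_univ_eq_sum_range (fun s => if s ≤ i then 1 else 0) n]
    have h2 : (Finset.range n).filter (fun s => s ≤ i) = Finset.range (i+1) := by
      ext m; simp only [Finset.mem_range, Finset.mem_filter]; omega
    rw [h1, h2, Finset.card_range]
  have hcardT : T.card = i + 1 := by
    rw [← hcardS]
    apply Finset.card_bij (fun t _ => σ t)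
    · intro t ht; simp [hS]; simp [hT] at ht; exact ht
    · intro a ha b hb hab; exact σ.injective hab
    · intro s hs; exact ⟨σ.symm s, by simp [hT, hS] at hs ⊢; exact hs, by simp⟩
  have hsub : T ⊆ Finset.univ.filter (fun t => (t : ℕ) < i) := by
    intro t ht
    simp only [hT, Finset.mem_filter, Finset.mem_univ, true_and] at ht
    simp only [Finset.mem_filter, Finset.mem_univ, true_and]
    -- w (σ t) ≥ w i > x i, and w(σ t) ≤ x t so x t > x i hence t < i
    have h1 : w i ≤ w ((σ t : Fin n) : ℕ) := hw.1 _ _ ht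
    have h2 : w ((σ t : Fin n) : ℕ) ≤ x t := h t
    by_contra hti
    push_neg at hti
    have := hx.1 i t hti
    omega
  have hcard2 : (Finset.univ.filter (fun t : Fin n => (t : ℕ) < i)).card ≤ i := by
    have : Finset.univ.filter (fun t : Fin n => (t : ℕ) < i) ⊆ S.erase ⟨i, hi⟩ := by
      intro t ht
      simp only [Finset.mem_filter, Finset.mem_univ, true_and] at ht
      refine Finset.mem_erase.2 ⟨?_, by simp [hS]; omega⟩
      intro hcon2; rw [hcon2] at ht; simp at ht
    calc _ ≤ (S.erase ⟨i, hi⟩).card := Finset.card_le_card this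
      _ ≤ S.card - 1 := by rw [Finset.card_erase_of_mem (by simp [hS])]
      _ ≤ i := by omega
  have := Finset.card_le_card hsub
  omega


lemma prod_X_pow_eq {k : Type*} [Field k] {n : ℕ} (f : Fin n → ℕ) :
    (∏ i : Fin n, (X i : MvPolynomial (Fin n) k) ^ f i) =
      monomial (Finsupp.equivFunOnFinite.symm f) 1 := by
  rw [monomial_eq]
  rw [Finsupp.prod_fintype]
  · simp
  · intro i; simp

lemma mem_IXset_iff {k : Type*} [Field k] {n : ℕ} (Xs : Set (ℕ → ℕ)) (y : ℕ → ℕ) :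
    mon k n y ∈ IXset k n Xs ↔
      ∃ w ∈ Xs, ∃ σ : Equiv.Perm (Fin n), ∀ i : Fin n, w ((σ i : Fin n) : ℕ) ≤ y (i : ℕ) := by
  constructor
  · intro h
    set S : Set (Fin n →₀ ℕ) :=
      {d | ∃ w ∈ Xs, ∃ σ : Equiv.Perm (Fin n), ∀ i : Fin n, d i = w ((σ i : Fin n) : ℕ)} with hSdef
    have hle : IXset k n Xs ≤ Ideal.span ((fun d => monomial d (1 : k)) '' S) := by
      rw [IXset]
      apply iSup₂_le
      intro w hw
      rw [Ipart]
      apply Ideal.span_le.2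
      rintro f ⟨σ, rfl⟩
      apply Ideal.subset_span
      exact ⟨Finsupp.equivFunOnFinite.symm (fun i : Fin n => w ((σ i : Fin n) : ℕ)),
        ⟨w, hw, σ, fun i => by simp⟩, (prod_X_pow_eq _).symm⟩
    have h2 := mem_ideal_span_monomial_image.1 (hle h)
    have hy : mon k n y = monomial (Finsupp.equivFunOnFinite.symm (fun i : Fin n => y i)) 1 :=
      prod_X_pow_eq _
    have hmem : Finsupp.equivFunOnFinite.symm (fun i : Fin n => y i) ∈ (mon k n y).support := by
      classical
      rw [hy, support_monomial, if_neg (one_ne_zero)]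
      simp
    obtain ⟨d, ⟨w, hw, σ, hd⟩, hdle⟩ := h2 _ hmem
    refine ⟨w, hw, σ, fun i => ?_⟩
    have := hdle i
    rw [hd i] at this
    simpa using this
  · rintro ⟨w, hw, σ, hle⟩
    have key : mon k n y = (∏ i : Fin n, (X i : MvPolynomial (Fin n) k) ^ w ((σ i : Fin n) : ℕ)) *
        ∏ i : Fin n, (X i : MvPolynomial (Fin n) k) ^ (y (i : ℕ) - w ((σ i : Fin n) : ℕ)) := by
      rw [mon, ← Finset.prod_mul_distrib]
      apply Finset.prod_congr rfl
      intro i _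
      rw [← pow_add]
      congr 1
      have := hle i
      omega
    rw [key]
    apply Ideal.mul_mem_right
    have h1 : (∏ i : Fin n, (X i : MvPolynomial (Fin n) k) ^ w ((σ i : Fin n) : ℕ)) ∈
        Ipart k n w := Ideal.subset_span ⟨σ, rfl⟩
    have h2 : Ipart k n w ≤ IXset k n Xs := by
      rw [IXset]
      exact le_iSup₂ (f := fun x (_ : x ∈ Xs) => Ipart k n x) w hw
    exact h2 h1


lemma lemA {n r : ℕ} (Xs : Set (ℕ → ℕ)) (hXs : ∀ x ∈ Xs, PartitionOn n x)
    (hsize : ∀ x ∈ Xs, psize n x = r)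
    (hreg : ∀ zl ∈ ZX n Xs, psize n zl.1 + zl.2 + 1 ≤ r)
    (w : ℕ → ℕ) (hw : w ∈ Xs) (a p q : ℕ)
    (hp1 : 1 ≤ p) (hqn : q < n)
    (hwa : ∀ i < p, w i = a) (hwp : w p < a)
    (hb : w q + 2 ≤ a)
    (hstep : p < q → w q < w (q - 1)) :
    ∃ v ∈ Xs, ∀ i : ℕ, v i ≤ (if i = p - 1 then a - 1 else if i = q then w q + 1 else w i) := by
  by_contra hcon
  push_neg at hcon
  set u : ℕ → ℕ := fun i => if i = p - 1 then a - 1 else if i = q then w q + 1 else w i with hu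
  -- basic facts about w
  have hwmono := (hXs w hw).1
  have hwvan := (hXs w hw).2
  have hwr := hsize w hw
  have hw0 : w 0 = a := hwa 0 hp1
  have hwle : ∀ i, w i ≤ a := fun i => hw0 ▸ hwmono 0 i (Nat.zero_le i)
  have hpq : p ≤ q := by
    by_contra hqp
    have := hwa q (by omega)
    omega
  have hwplt : ∀ i, p ≤ i → w i < a := fun i hi => lt_of_le_of_lt (hwmono p i hi) hwp
  have hpn : p - 1 < n := by omega
  -- values of u
  have hu_lt : ∀ i, i < p - 1 → u i = a := by
    intro i hi
    simp only [hu]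
    rw [if_neg (by omega), if_neg (by omega), hwa i (by omega)]
  have hu_p : u (p-1) = a - 1 := by simp [hu]
  have hu_q : u q = w q + 1 := by
    simp only [hu]
    rw [if_neg (by omega : ¬ q = p - 1)]
    simp
  have hu_rest : ∀ i, p ≤ i → i ≠ q → u i = w i := by
    intro i h1 h2
    simp only [hu]
    rw [if_neg (by omega), if_neg h2]
  have hu_tail : ∀ i, p ≤ i → u i ≤ a - 1 := by
    intro i hi
    by_cases hiq : i = q
    · rw [hiq, hu_q]; omega
    · rw [hu_rest i hi hiq]; have := hwplt i hi; omega
  have humono : ∀ i j : ℕ, i ≤ j → u j ≤ u i := by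
    intro i j hij
    rcases Nat.lt_or_ge j (p-1) with hj | hj
    · rw [hu_lt j hj, hu_lt i (by omega)]
    rcases Nat.eq_or_lt_of_le hj with hj' | hj'
    · rw [← hj', hu_p]
      rcases Nat.lt_or_ge i (p-1) with hi | hi
      · rw [hu_lt i hi]; omega
      · have : i = p - 1 := by omega
        rw [this, hu_p]
    -- now j ≥ p
    have hjp : p ≤ j := by omega
    have huj : u j ≤ a - 1 := hu_tail j hjp
    rcases Nat.lt_or_ge i (p-1) with hi | hi
    · rw [hu_lt i hi]; omega
    rcases Nat.eq_or_lt_of_le hi with hi' | hi'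
    · rw [← hi', hu_p]
      exact huj
    have hip : p ≤ i := by omega
    by_cases hjq : j = q
    · rw [hjq, hu_q]
      by_cases hiq : i = q
      · rw [hiq, hu_q]
      · rw [hu_rest i hip hiq]
        have hiltq : i < q := by omega
        have hplt : p < q := by omega
        have h1 := hstep hplt
        have h2 := hwmono i (q-1) (by omega)
        omega
      
    · rw [hu_rest j hjp hjq]
      by_cases hiq : i = q
      · rw [hiq, hu_q]
        have hqj : q < j := by omega
        have := hwmono q j (by omega)
        have := hwmono (q) (j) hqj.le
        omega
      · rw [hu_rest i hip hiq]
        exact hwmono i j hij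
  have huvan : ∀ i, n ≤ i → u i = 0 := by
    intro i hi
    have h1 : i ≠ p - 1 := by omega
    have h2 : i ≠ q := by omega
    rw [hu_rest i (by omega) h2]
    exact hwvan i hi
  have huPart : PartitionOn n u := ⟨humono, huvan⟩
  -- psize u = r
  have hpsu : psize n u = r := by
    have hpm : p - 1 ∈ Finset.range n := Finset.mem_range.2 hpn
    have hqm : q ∈ (Finset.range n).erase (p-1) :=
      Finset.mem_erase.2 ⟨by omega, Finset.mem_range.2 hqn⟩
    have e1 : psize n u = u (p-1) + (u q + ∑ i ∈ ((Finset.range n).erase (p-1)).erase q, u i) := by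
      rw [psize, ← Finset.add_sum_erase _ u hpm, ← Finset.add_sum_erase _ u hqm]
    have e2 : psize n w = w (p-1) + (w q + ∑ i ∈ ((Finset.range n).erase (p-1)).erase q, w i) := by
      rw [psize, ← Finset.add_sum_erase _ w hpm, ← Finset.add_sum_erase _ w hqm]
    have e3 : ∑ i ∈ ((Finset.range n).erase (p-1)).erase q, u i
        = ∑ i ∈ ((Finset.range n).erase (p-1)).erase q, w i := by
      apply Finset.sum_congr rfl
      intro i hi
      have h1 := (Finset.mem_erase.1 hi).1
      have h2 := (Finset.mem_erase.1 (Finset.mem_erase.1 hi).2).1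
      simp only [hu]
      rw [if_neg h2, if_neg h1]
    have hwpa : w (p-1) = a := hwa (p-1) (by omega)
    rw [hwr] at e2
    rw [e1, e3, hu_p, hu_q]
    omega
  -- step 1
  set z₁ : ℕ → ℕ := trunc u (a-1) with hz₁
  have hz₁le : ∀ i, z₁ i ≤ u i := fun i => min_le_left _ _
  have hz₁lt : ∀ i, i < p → z₁ i = a - 1 := by
    intro i hi
    rcases Nat.lt_or_ge i (p-1) with h | h
    · simp only [hz₁, trunc, hu_lt i h]; omega
    · have : i = p - 1 := by omega
      simp only [hz₁, trunc, this, hu_p]; omega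
  have hz₁ge : ∀ i, p ≤ i → z₁ i = u i := by
    intro i hi
    have := hu_tail i hi
    simp only [hz₁, trunc]; omega
  have hz₁Part : PartitionOn n z₁ := by
    constructor
    · intro i j hij
      exact min_le_min (humono i j hij) le_rfl
    · intro i hi
      simp only [hz₁, trunc, huvan i hi, Nat.zero_min]
  have hz₁0 : z₁ 0 = a - 1 := by
    rcases Nat.lt_or_ge 0 p with h | h
    · exact hz₁lt 0 (by omega)
    · omega
  have hpsz₁ : psize n z₁ + p = r + 1 := by
    have e1 : psize n u = psize n z₁ + (p - 1) := by
      have : ∀ i ∈ Finset.range n, u i = z₁ i + (if i < p - 1 then 1 else 0) := by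
        intro i _
        rcases Nat.lt_or_ge i (p-1) with h | h
        · rw [hu_lt i h, if_pos h, hz₁lt i (by omega)]; omega
        · rw [if_neg (by omega)]
          rcases Nat.lt_or_ge i p with h2 | h2
          · have : i = p - 1 := by omega
            rw [this, hu_p, hz₁lt (p-1) (by omega)]
            omega
          · rw [hz₁ge i h2]
            omega
      rw [psize, Finset.sum_congr rfl this, Finset.sum_add_distrib]
      congr 1
      rw [← Finset.card_filter]
      have : (Finset.range n).filter (fun i => i < p - 1) = Finset.range (p-1) := by
        ext m; simp only [Finset.mem_filter, Finset.mem_range]; omega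
      rw [this, Finset.card_range]
    omega
  have ha1 : 1 ≤ a := by omega
  have hconj0 : ∀ v ∈ Xs, conj v a = 0 → ∀ i, v i < a := by
    intro v hv hc i
    by_contra hle
    push_neg at hle
    have := (conj_lt_iff (hXs v hv) ha1 i).2 hle
    omega
  set M₁ : Set ℕ := {m | ∃ v ∈ Xs, trunc v (a-1) ≤ z₁ ∧ conj v a = m} with hM₁
  have htw : trunc w (a-1) ≤ z₁ := by
    intro i
    rcases Nat.lt_or_ge i p with h | h
    · rw [hz₁lt i h]; exact min_le_right _ _
    · have h1 : w i < a := hwplt i h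
      have h2 : trunc w (a-1) i = w i := by simp only [trunc]; omega
      have h4 : w i ≤ u i := by
        by_cases hiq : i = q
        · subst hiq; rw [hu_q]; omega
        · rw [hu_rest i h hiq]
      rw [hz₁ge i h, h2]
      exact h4
  have hM₁ne : M₁.Nonempty := ⟨conj w a, w, hw, htw, rfl⟩
  obtain ⟨v₁, hv₁Xs, hv₁tr, hv₁conj⟩ := Nat.sInf_mem hM₁ne
  set s := sInf M₁ with hs
  have hs1 : 1 ≤ s := by
    by_contra h
    push_neg at h
    have hc0 : conj v₁ a = 0 := by omega
    have hlt := hconj0 v₁ hv₁Xs hc0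
    obtain ⟨i, hi⟩ := hcon v₁ hv₁Xs
    have hile : v₁ i ≤ u i := by
      have h1 : trunc v₁ (a-1) i ≤ z₁ i := hv₁tr i
      have h2 : trunc v₁ (a-1) i = v₁ i := by
        simp only [trunc]; have := hlt i; omega
      have := hz₁le i
      omega
    have hi' : u i < v₁ i := hi
    omega
  have ha' : a - 1 + 1 = a := by omega
  have hss : s - 1 + 1 = s := by omega
  have hZX₁ : ((z₁, s - 1) : (ℕ → ℕ) × ℕ) ∈ ZX n Xs := by
    refine ⟨hz₁Part, ?_, ?_⟩
    · refine ⟨v₁, hv₁Xs, ?_, ?_⟩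
      · simpa only [hz₁0] using hv₁tr
      · simp only [hz₁0, ha', hss, hv₁conj]
        exact le_rfl
    · intro v hv htr hle
      simp only [hz₁0, ha', hss] at htr hle ⊢
      have hmem : conj v a ∈ M₁ := ⟨v, hv, htr, rfl⟩
      have := Nat.sInf_le hmem
      omega
  have hr1 : psize n z₁ + (s - 1) + 1 ≤ r := hreg _ hZX₁
  have hsp : s + 1 ≤ p := by omega
  -- step 2
  have hv₁mono := (hXs v₁ hv₁Xs).1
  have hv₁van := (hXs v₁ hv₁Xs).2
  have hv₁low : ∀ i, i < s ↔ a ≤ v₁ i := by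
    intro i
    rw [← hv₁conj]
    exact conj_lt_iff (hXs v₁ hv₁Xs) ha1 i
  have hu0 : u 0 = a := by
    have h2p : 2 ≤ p := by omega
    exact hu_lt 0 (by omega)
  have htr₂ : trunc v₁ a ≤ u := by
    intro i
    rcases Nat.lt_or_ge (v₁ i) a with h | h
    · have h1 : trunc v₁ a i = v₁ i := by simp only [trunc]; omega
      have h2 : trunc v₁ (a-1) i = v₁ i := by simp only [trunc]; omega
      have h3 : trunc v₁ (a-1) i ≤ z₁ i := hv₁tr i
      rw [h1]
      exact le_trans (h2 ▸ h3) (hz₁le i)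
    · have h1 : trunc v₁ a i = a := by simp only [trunc]; omega
      have h2 : i < s := (hv₁low i).2 h
      rw [h1, hu_lt i (by omega)]
  set M₂ : Set ℕ := {m | ∃ v ∈ Xs, trunc v a ≤ u ∧ conj v (a+1) = m} with hM₂
  have hM₂ne : M₂.Nonempty := ⟨conj v₁ (a+1), v₁, hv₁Xs, htr₂, rfl⟩
  obtain ⟨v₂, hv₂Xs, hv₂tr, hv₂conj⟩ := Nat.sInf_mem hM₂ne
  set s₂ := sInf M₂ with hs₂
  have hs₂1 : 1 ≤ s₂ := by
    by_contra h
    push_neg at h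
    have hc0 : conj v₂ (a+1) = 0 := by omega
    have hlt : ∀ i, v₂ i < a + 1 := by
      intro i
      by_contra hle2
      push_neg at hle2
      have := (conj_lt_iff (hXs v₂ hv₂Xs) (by omega : 1 ≤ a + 1) i).2 hle2
      omega
    obtain ⟨i, hi⟩ := hcon v₂ hv₂Xs
    have hile : v₂ i ≤ u i := by
      have h1 : trunc v₂ a i ≤ u i := hv₂tr i
      have h2 : trunc v₂ a i = v₂ i := by
        simp only [trunc]; have := hlt i; omega
      omega
    have hi' : u i < v₂ i := hi
    omega
  have hss₂ : s₂ - 1 + 1 = s₂ := by omega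
  have hZX₂ : ((u, s₂ - 1) : (ℕ → ℕ) × ℕ) ∈ ZX n Xs := by
    refine ⟨huPart, ?_, ?_⟩
    · refine ⟨v₂, hv₂Xs, ?_, ?_⟩
      · simpa only [hu0] using hv₂tr
      · simp only [hu0, hss₂, hv₂conj]
        exact le_rfl
    · intro v hv htr hle
      simp only [hu0, hss₂] at htr hle ⊢
      have hmem : conj v (a+1) ∈ M₂ := ⟨v, hv, htr, rfl⟩
      have := Nat.sInf_le hmem
      omega
  have hr2 : psize n u + (s₂ - 1) + 1 ≤ r := hreg _ hZX₂
  omega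


theorem stmt_10 {k : Type*} [Field k] (n r : ℕ) (hr : 1 ≤ r)
    (Xs : Set (ℕ → ℕ)) (hne : Xs.Nonempty) (hXs : ∀ x ∈ Xs, PartitionOn n x)
    (hsize : ∀ x ∈ Xs, psize n x = r)
    (hreg : ∀ zl ∈ ZX n Xs, psize n zl.1 + zl.2 + 1 ≤ r) :
    SymShifted k n (IXset k n Xs) := by
  intro x hx hmem j hj0 hjn hjx
  obtain ⟨w, hw, σ, hwσ⟩ := (mem_IXset_iff Xs x).1 hmem
  have hwx : ∀ i, w i ≤ x i := sorted_le (hXs w hw) hx σ hwσ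
  have hxmono := hx.1
  have hxvan := hx.2
  have hwmono := (hXs w hw).1
  have hn2 : 2 ≤ n := by omega
  rcases Nat.lt_or_ge (x j + 1) (x 0) with hcase | hcase
  swap
  · -- trivial case : x j + 1 = x 0
    have hxj1 : x j + 1 = x 0 := by omega
    apply (mem_IXset_iff Xs _).2
    refine ⟨w, hw, Equiv.swap (⟨0, by omega⟩ : Fin n) (⟨j, hjn⟩ : Fin n), fun i => ?_⟩
    by_cases h0 : i = (⟨0, by omega⟩ : Fin n)
    · rw [h0, Equiv.swap_apply_left]
      have h1 := hwx j
      simp only [Fin.val_mk]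
      split_ifs <;> omega
    · by_cases hj : i = (⟨j, hjn⟩ : Fin n)
      · rw [hj, Equiv.swap_apply_right]
        have h1 := hwx 0
        simp only [Fin.val_mk]
        split_ifs <;> omega
      · rw [Equiv.swap_apply_of_ne_of_ne h0 hj]
        have h1 : (i : ℕ) ≠ 0 := fun hc => h0 (Fin.ext hc)
        have h2 : (i : ℕ) ≠ j := fun hc => hj (Fin.ext hc)
        have h3 := hwx (i : ℕ)
        split_ifs <;> omega
  -- main case : x j + 2 ≤ x 0
  · have ha2 : x j + 2 ≤ x 0 := hcase
    have ha1 : 1 ≤ x 0 := by omega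
    have hp_iff : ∀ i, i < conj x (x 0) ↔ x 0 ≤ x i := fun i => conj_lt_iff hx ha1 i
    set p := conj x (x 0) with hpdef
    have hp1 : 1 ≤ p := by
      have := (hp_iff 0).2 le_rfl
      omega
    have hxa : ∀ i, i < p → x i = x 0 := by
      intro i hi
      have h1 := (hp_iff i).1 hi
      have h2 := hxmono 0 i (Nat.zero_le i)
      omega
    have hxp : x p < x 0 := by
      by_contra hc
      push_neg at hc
      have := (hp_iff p).2 hc
      omega
    -- q := least index with x q = x j
    have hqex : ∃ i, x i = x j := ⟨j, rfl⟩
    set q := Nat.find hqex with hqdef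
    have hxq : x q = x j := Nat.find_spec hqex
    have hqj : q ≤ j := Nat.find_le rfl
    have hqlt : ∀ i, i < q → x j + 1 ≤ x i := by
      intro i hi
      have h1 : x i ≠ x j := Nat.find_min hqex hi
      have h2 : x j ≤ x i := by
        have := hxmono i j (by omega)
        have := hxmono i q (by omega)
        omega
      omega
    have hpq : p ≤ q := by
      by_contra hc
      push_neg at hc
      have := hxa q hc
      omega
    have hq1 : 1 ≤ q := by
      rcases Nat.eq_zero_or_pos q with h | h
      · rw [h] at hxq; omega
      · exact h
    have hqn : q < n := by omega
    have hpn : p - 1 < n := by omega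
    -- find v ∈ Xs with v ≤ ỹ
    have hkey : ∃ v ∈ Xs, ∀ i : ℕ,
        v i ≤ (if i = p - 1 then x 0 - 1 else if i = q then x j + 1 else x i) := by
      rcases Nat.lt_or_ge (w (p-1)) (x 0) with hwp1 | hwp1
      · -- w itself works
        refine ⟨w, hw, fun i => ?_⟩
        by_cases h1 : i = p - 1
        · rw [if_pos h1, h1]; omega
        · rw [if_neg h1]
          by_cases h2 : i = q
          · rw [if_pos h2, h2]
            have := hwx q
            omega
          · rw [if_neg h2]; exact hwx i
      · -- w (p-1) = x 0 : apply lemA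
        have hwpa : w (p-1) = x 0 := by
          have := hwx (p-1)
          have := hxa (p-1) (by omega)
          omega
        have hwa : ∀ i < p, w i = x 0 := by
          intro i hi
          have h1 := hwmono i (p-1) (by omega)
          have h2 := hwx i
          have h3 := hxa i hi
          omega
        have hq'ex : ∃ i, w i = w q := ⟨q, rfl⟩
        set q' := Nat.find hq'ex with hq'def
        have hwq' : w q' = w q := Nat.find_spec hq'ex
        have hq'q : q' ≤ q := Nat.find_le rfl
        have hwqt : w q ≤ x j := by
          have := hwx q
          omega
        have hq'p : p ≤ q' := by
          by_contra hc
          push_neg at hc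
          have := hwa q' hc
          omega
        obtain ⟨v, hvXs, hvu⟩ := lemA Xs hXs hsize hreg w hw (x 0) p q'
          hp1 (by omega)
          hwa (by have := hwx p; omega)
          (by omega)
          (by
            intro hplt
            have h1 : w (q'-1) ≠ w q := Nat.find_min hq'ex (by omega)
            have h2 := hwmono (q'-1) q' (by omega)
            omega)
        refine ⟨v, hvXs, fun i => ?_⟩
        refine le_trans (hvu i) ?_
        by_cases h1 : i = p - 1
        · rw [if_pos h1, if_pos h1]
        · rw [if_neg h1, if_neg h1]
          by_cases h2 : i = q'
          · rw [if_pos h2]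
            by_cases h3 : i = q
            · rw [if_pos h3]
              omega
            · rw [if_neg h3]
              have h4 : i < q := by omega
              have := hqlt i h4
              omega
          · rw [if_neg h2]
            by_cases h3 : i = q
            · rw [if_pos h3, h3]
              have := hwx q
              omega
            · rw [if_neg h3]
              exact hwx i
    obtain ⟨v, hvXs, hv⟩ := hkey
    -- the sorting permutation
    apply (mem_IXset_iff Xs _).2
    set i0 : Fin n := ⟨0, by omega⟩ with hi0
    set ip : Fin n := ⟨p-1, hpn⟩ with hip
    set ij : Fin n := ⟨j, hjn⟩ with hij
    set iq : Fin n := ⟨q, hqn⟩ with hiq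
    set τ : Equiv.Perm (Fin n) := (Equiv.swap i0 ip) * (Equiv.swap ij iq) with hτ
    have hip_ne_ij : ip ≠ ij := fun hc => by
      have : p - 1 = j := congrArg Fin.val hc
      omega
    have hip_ne_iq : ip ≠ iq := fun hc => by
      have : p - 1 = q := congrArg Fin.val hc
      omega
    have hi0_ne_ij : i0 ≠ ij := fun hc => by
      have : (0:ℕ) = j := congrArg Fin.val hc
      omega
    have hi0_ne_iq : i0 ≠ iq := fun hc => by
      have : (0:ℕ) = q := congrArg Fin.val hc
      omega
    have hτkey : ∀ m : Fin n,
        (if (m:ℕ) = p - 1 then x 0 - 1 else if (m:ℕ) = q then x j + 1 else x (m:ℕ))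
          = (if ((τ m : Fin n) : ℕ) = 0 then x 0 - 1 else
              if ((τ m : Fin n) : ℕ) = j then x j + 1 else x ((τ m : Fin n) : ℕ)) := by
      intro m
      by_cases hmp : m = ip
      · rw [hmp]
        have e1 : τ ip = i0 := by
          rw [hτ]
          simp only [Equiv.Perm.mul_apply]
          rw [Equiv.swap_apply_of_ne_of_ne hip_ne_ij hip_ne_iq, Equiv.swap_apply_right]
        rw [e1]
        have e2 : ((ip : Fin n) : ℕ) = p - 1 := rfl
        have e3 : ((i0 : Fin n) : ℕ) = 0 := rfl
        rw [e2, e3]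
        split_ifs <;> omega
      by_cases hm0 : m = i0
      · -- p ≥ 2 here since i0 ≠ ip (else covered above)
        have hp2 : 2 ≤ p := by
          by_contra hc
          have : i0 = ip := Fin.ext (by simp [hi0, hip]; omega)
          exact hmp (hm0.trans this)
        rw [hm0]
        have e1 : τ i0 = ip := by
          rw [hτ]
          simp only [Equiv.Perm.mul_apply]
          rw [Equiv.swap_apply_of_ne_of_ne hi0_ne_ij hi0_ne_iq, Equiv.swap_apply_left]
        rw [e1]
        have e2 : ((i0 : Fin n) : ℕ) = 0 := rfl
        have e3 : ((ip : Fin n) : ℕ) = p - 1 := rfl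
        rw [e2, e3]
        have h4 := hxa (p-1) (by omega)
        have h5 : x 0 = x 0 := rfl
        split_ifs <;> omega
      by_cases hmq : m = iq
      · rw [hmq]
        have e1 : τ iq = ij := by
          rw [hτ]
          simp only [Equiv.Perm.mul_apply]
          rw [Equiv.swap_apply_right, Equiv.swap_apply_of_ne_of_ne (Ne.symm hi0_ne_ij) (Ne.symm hip_ne_ij)]
        rw [e1]
        have e2 : ((iq : Fin n) : ℕ) = q := rfl
        have e3 : ((ij : Fin n) : ℕ) = j := rfl
        rw [e2, e3]
        split_ifs <;> omega
      by_cases hmj : m = ij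
      · rw [hmj]
        have e1 : τ ij = iq := by
          rw [hτ]
          simp only [Equiv.Perm.mul_apply]
          rw [Equiv.swap_apply_left, Equiv.swap_apply_of_ne_of_ne (Ne.symm hi0_ne_iq) (Ne.symm hip_ne_iq)]
        rw [e1]
        have e2 : ((ij : Fin n) : ℕ) = j := rfl
        have e3 : ((iq : Fin n) : ℕ) = q := rfl
        have hjq : j ≠ q := fun hc => hmq (hmj.trans (Fin.ext (by rw [e2, e3, hc])))
        rw [e2, e3]
        have h4 := hxq
        split_ifs <;> omega
      · have e1 : τ m = m := by
          rw [hτ]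
          simp only [Equiv.Perm.mul_apply]
          rw [Equiv.swap_apply_of_ne_of_ne hmj hmq, Equiv.swap_apply_of_ne_of_ne hm0 hmp]
        rw [e1]
        have h0 : (m:ℕ) ≠ 0 := fun hc => hm0 (Fin.ext hc)
        have hpne : (m:ℕ) ≠ p - 1 := fun hc => hmp (Fin.ext hc)
        have hjne : (m:ℕ) ≠ j := fun hc => hmj (Fin.ext hc)
        have hqne : (m:ℕ) ≠ q := fun hc => hmq (Fin.ext hc)
        split_ifs <;> omega
    refine ⟨v, hvXs, τ.symm, fun i => ?_⟩
    have h1 := hv ((τ.symm i : Fin n) : ℕ)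
    have h2 := hτkey (τ.symm i)
    rw [Equiv.apply_symm_apply] at h2
    show v ((τ.symm i : Fin n) : ℕ) ≤
      (if (i:ℕ) = 0 then x 0 - 1 else if (i:ℕ) = j then x j + 1 else x (i:ℕ))
    rw [← h2]
    exact h1
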